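/- For every admissible reparameterization τ : [0,1] → [0,1], the cost satisfies the lower bound J(τ) ≥ (∫₀¹ 𝔤(σ)^{1/2} dσ)². -/

import Mathlib

/-- **Cauchy–Schwarz lower bound for the GORA cost.** For every admissible
reparameterization `τ`, `J(τ) ≥ (∫₀¹ √(𝔤(σ)) dσ)²`. -/
theorem gora_cost_lower_bound
    (𝔤 : ℝ → ℝ)
    (h𝔤_cont : ContinuousOn 𝔤 (Set.Icc 0 1))
    (h𝔤_pos : ∀ σ ∈ Set.Icc (0:ℝ) 1, 0 < 𝔤 σ)
    (τ τ' : ℝ → ℝ)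
    (hτ_maps : Set.MapsTo τ (Set.Icc 0 1) (Set.Icc 0 1))
    (hτ_deriv : ∀ t ∈ Set.Icc (0:ℝ) 1, HasDerivWithinAt τ (τ' t) (Set.Icc 0 1) t)
    (hτ'_cont : ContinuousOn τ' (Set.Icc 0 1))
    (hτ'_nonneg : ∀ t ∈ Set.Icc (0:ℝ) 1, 0 ≤ τ' t)
    (hτ0 : τ 0 = 0) (hτ1 : τ 1 = 1) :
    (∫ σ in (0:ℝ)..1, Real.sqrt (𝔤 σ)) ^ 2
      ≤ ∫ t in (0:ℝ)..1, 𝔤 (τ t) * (τ' t) ^ 2 := by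
  have huIcc : Set.uIcc (0:ℝ) 1 = Set.Icc 0 1 := Set.uIcc_of_le zero_le_one
  set f : ℝ → ℝ := fun t => Real.sqrt (𝔤 (τ t)) * τ' t with hfdef
  have hτc : ContinuousOn τ (Set.Icc 0 1) :=
    fun t ht => (hτ_deriv t ht).continuousWithinAt
  have hfc : ContinuousOn f (Set.Icc 0 1) :=
    ((h𝔤_cont.comp hτc hτ_maps).sqrt).mul hτ'_cont
  -- change of variables
  have hcv : ∫ t in (0:ℝ)..1, f t = ∫ σ in (0:ℝ)..1, Real.sqrt (𝔤 σ) := by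
    have h := intervalIntegral.integral_comp_smul_deriv'' (f := τ) (f' := τ')
      (g := fun σ => Real.sqrt (𝔤 σ)) (a := 0) (b := 1)
      (by rw [huIcc]; exact hτc)
      (by
        intro x hx
        simp only [min_eq_left zero_le_one, max_eq_right zero_le_one] at hx
        exact ((hτ_deriv x ⟨hx.1.le, hx.2.le⟩).hasDerivAt
          (Icc_mem_nhds hx.1 hx.2)).hasDerivWithinAt)
      (by rw [huIcc]; exact hτ'_cont)
      (by
        rw [huIcc]
        exact (h𝔤_cont.sqrt).mono (hτ_maps.image_subset))
    rw [hτ0, hτ1] at h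
    rw [← h]
    apply intervalIntegral.integral_congr
    intro t ht
    simp [hfdef, mul_comm, Function.comp]
  set I := ∫ t in (0:ℝ)..1, f t with hI
  have hfcu : ContinuousOn f (Set.uIcc 0 1) := huIcc ▸ hfc
  have hint : IntervalIntegrable f MeasureTheory.volume 0 1 :=
    hfcu.intervalIntegrable
  have hint2 : IntervalIntegrable (fun t => f t ^ 2) MeasureTheory.volume 0 1 :=
    (hfcu.pow 2).intervalIntegrable
  have h0 : 0 ≤ ∫ t in (0:ℝ)..1, (f t - I) ^ 2 :=
    intervalIntegral.integral_nonneg zero_le_one (fun t _ => sq_nonneg _)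
  have hexp : ∫ t in (0:ℝ)..1, (f t - I) ^ 2
      = (∫ t in (0:ℝ)..1, f t ^ 2) - I ^ 2 := by
    have heq : Set.EqOn (fun t => (f t - I) ^ 2)
        (fun t => f t ^ 2 - (2 * I) * f t + I ^ 2) (Set.uIcc 0 1) := by
      intro t _; simp only; ring
    rw [intervalIntegral.integral_congr heq,
      intervalIntegral.integral_add ((hint2.sub (hint.const_mul (2 * I))))
        intervalIntegrable_const,
      intervalIntegral.integral_sub hint2 (hint.const_mul (2 * I)),
      intervalIntegral.integral_const_mul, intervalIntegral.integral_const]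
    have hII : (∫ t in (0:ℝ)..1, f t) = I := rfl
    rw [hII]
    simp only [sub_zero, smul_eq_mul, one_mul]
    ring
  have hCS : I ^ 2 ≤ ∫ t in (0:ℝ)..1, f t ^ 2 := by linarith [hexp ▸ h0]
  have hsq : ∫ t in (0:ℝ)..1, f t ^ 2 = ∫ t in (0:ℝ)..1, 𝔤 (τ t) * (τ' t) ^ 2 := by
    apply intervalIntegral.integral_congr
    intro t ht
    rw [huIcc] at ht
    have hg0 : 0 ≤ 𝔤 (τ t) := (h𝔤_pos _ (hτ_maps ht)).le
    simp only [hfdef]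
    rw [mul_pow, Real.sq_sqrt hg0]
  calc (∫ σ in (0:ℝ)..1, Real.sqrt (𝔤 σ)) ^ 2 = I ^ 2 := by rw [← hcv]
    _ ≤ ∫ t in (0:ℝ)..1, f t ^ 2 := hCS
    _ = _ := hsq
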